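/- Let $n \ge 3$, $2 \le k \le n-1$, $a \in \mathbb{R}^n$ with all $a_i > 0$ and $\sigma_k(a) = 1$, and $0 < \alpha < \beta$. Suppose $\omega \in C^2(\alpha,\beta)$ with $\omega''$ not identically zero is such that $u(x) = \omega\left(\frac12 \sum_i a_i x_i^2\right)$ satisfies $\sigma_k(\lambda(D^2 u)) = 1$ on the region $\{x \in \mathbb{R}^n : \alpha < \frac12\sum_i a_i x_i^2 < \beta\}$. Then $a_1 = a_2 = \cdots = a_n = \binom{n}{k}^{-1/k}$. -/

import Mathlib

open Finset Matrix

/-- The `k`-th elementary symmetric function of the variables `a i` for `i ∈ s`. -/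
noncomputable def esym {n : ℕ} (s : Finset (Fin n)) (k : ℕ) (a : Fin n → ℝ) : ℝ :=
  ∑ T ∈ s.powersetCard k, ∏ i ∈ T, a i

/-- The Hessian matrix of `u : ℝⁿ → ℝ` at `x`. -/
noncomputable def hess {n : ℕ} (u : (Fin n → ℝ) → ℝ) (x : Fin n → ℝ) :
    Matrix (Fin n) (Fin n) ℝ :=
  fun i j => fderiv ℝ (fun y => fderiv ℝ u y (Pi.single j 1)) x (Pi.single i 1)

section Aux

lemma esym_congr' {n : ℕ} (s : Finset (Fin n)) (k : ℕ) {a b : Fin n → ℝ}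
    (h : ∀ i ∈ s, a i = b i) : esym s k a = esym s k b :=
  Finset.sum_congr rfl fun _ hT => Finset.prod_congr rfl fun i hi =>
    h i ((Finset.mem_powersetCard.mp hT).1 hi)

lemma esym_smul' {n : ℕ} (s : Finset (Fin n)) (k : ℕ) (c : ℝ) (a : Fin n → ℝ) :
    esym s k (fun i => c * a i) = c ^ k * esym s k a := by
  unfold esym
  rw [Finset.mul_sum]
  refine Finset.sum_congr rfl fun T hT => ?_
  rw [Finset.prod_mul_distrib, Finset.prod_const, (Finset.mem_powersetCard.mp hT).2]

lemma esym_pos' {n : ℕ} (s : Finset (Fin n)) (k : ℕ) (a : Fin n → ℝ)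
    (h : ∀ i, 0 < a i) (hk : k ≤ s.card) : 0 < esym s k a := by
  refine Finset.sum_pos (fun T _ => Finset.prod_pos fun i _ => h i) ?_
  exact Finset.powersetCard_nonempty.2 hk

lemma esym_insert' {n : ℕ} (m : Fin n) (s : Finset (Fin n)) (hms : m ∉ s) (k : ℕ)
    (a : Fin n → ℝ) :
    esym (insert m s) (k + 1) a = esym s (k + 1) a + a m * esym s k a := by
  unfold esym
  rw [Finset.powersetCard_succ_insert hms, Finset.sum_union, Finset.sum_image, Finset.mul_sum]
  · congr 1
    refine Finset.sum_congr rfl fun T hT => ?_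
    have hmT : m ∉ T := fun h => hms ((Finset.mem_powersetCard.mp hT).1 h)
    rw [Finset.prod_insert hmT]
  · intro T hT T' hT' hE
    have hmT : m ∉ T := fun h => hms ((Finset.mem_powersetCard.mp hT).1 h)
    have hmT' : m ∉ T' := fun h => hms ((Finset.mem_powersetCard.mp hT').1 h)
    have := congrArg (fun S => Finset.erase S m) hE
    simpa [Finset.erase_insert, hmT, hmT'] using this
  · rw [Finset.disjoint_left]
    rintro T hT hT2
    obtain ⟨T', hT', rfl⟩ := Finset.mem_image.mp hT2
    exact hms ((Finset.mem_powersetCard.mp hT).1 (Finset.mem_insert_self m T'))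

lemma esym_ladder' {n : ℕ} (m : Fin n) (k : ℕ) (a : Fin n → ℝ) :
    esym Finset.univ (k + 1) a
      = esym (Finset.univ.erase m) (k + 1) a + a m * esym (Finset.univ.erase m) k a := by
  conv_lhs => rw [← Finset.insert_erase (Finset.mem_univ m)]
  exact esym_insert' m _ (Finset.notMem_erase m _) k a

open Polynomial in
lemma charpoly_diag' {n : ℕ} (d : Fin n → ℝ) :
    (Matrix.diagonal d).charpoly = ∏ i, (X - C (d i)) := by
  rw [Matrix.charpoly]
  have h : charmatrix (Matrix.diagonal d)
      = Matrix.diagonal (fun i => (X : ℝ[X]) - C (d i)) := by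
    ext i j
    by_cases hij : i = j
    · subst hij; simp
    · simp [Matrix.charmatrix_apply_ne _ _ _ hij, Matrix.diagonal_apply_ne _ hij]
  rw [h, Matrix.det_diagonal]

open Polynomial in
lemma charpoly_unitary_conj' {n : ℕ} (U D : Matrix (Fin n) (Fin n) ℝ)
    (hU : U ∈ Matrix.unitaryGroup (Fin n) ℝ) :
    (U * D * star U).charpoly = D.charpoly := by
  have hU1 : U * star U = 1 := Matrix.mem_unitaryGroup_iff.mp hU
  set f := RingHom.mapMatrix (m := Fin n) (Polynomial.C : ℝ →+* ℝ[X]) with hf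
  have hscal : ∀ B : Matrix (Fin n) (Fin n) ℝ[X],
      Commute (Matrix.scalar (Fin n) (X : ℝ[X])) B :=
    fun B => Matrix.scalar_commute _ (fun r' => Commute.all _ _) B
  have hker : charmatrix (U * D * star U) = f U * charmatrix D * f (star U) := by
    have h1 : charmatrix (U * D * star U)
        = Matrix.scalar (Fin n) (X : ℝ[X]) - f U * f D * f (star U) := by
      rw [charmatrix]; congr 1; simp [hf, _root_.map_mul]
    have h2 : Matrix.scalar (Fin n) (X : ℝ[X]) = f U * Matrix.scalar (Fin n) X * f (star U) := by
      rw [← (hscal (f U)).eq, mul_assoc, ← _root_.map_mul, hU1, _root_.map_one, mul_one]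
    rw [h1]
    conv_lhs => rw [h2]
    rw [charmatrix, mul_sub, sub_mul]
  rw [Matrix.charpoly, Matrix.charpoly, hker, Matrix.det_mul, Matrix.det_mul]
  have : (f U).det * (f (star U)).det = 1 := by
    rw [← Matrix.det_mul, ← _root_.map_mul, hU1, _root_.map_one, Matrix.det_one]
  rw [mul_comm ((f U).det), mul_assoc, this, mul_one]

open Polynomial in
lemma esym_eigenvalues_diagonal' {n k : ℕ} (d : Fin n → ℝ) (A : Matrix (Fin n) (Fin n) ℝ)
    (hA : A.IsHermitian) (hAd : A = Matrix.diagonal d) :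
    esym Finset.univ k hA.eigenvalues = esym Finset.univ k d := by
  subst hAd
  have h2 : (Matrix.diagonal d).charpoly = ∏ i, (X - C (hA.eigenvalues i)) := by
    conv_lhs => rw [hA.spectral_theorem]
    rw [Unitary.conjStarAlgAut_apply, charpoly_unitary_conj' _ _ (hA.eigenvectorUnitary).2]
    have : (RCLike.ofReal ∘ hA.eigenvalues : Fin n → ℝ) = hA.eigenvalues := by
      funext i; simp [RCLike.ofReal_real_eq_id]
    rw [this, charpoly_diag']
  have hprod : ∏ i, (X - C (hA.eigenvalues i)) = ∏ i, (X - C (d i)) := by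
    rw [← h2, charpoly_diag']
  have hms : Multiset.map hA.eigenvalues Finset.univ.val = Multiset.map d Finset.univ.val := by
    have hroots := congrArg Polynomial.roots hprod
    rw [Finset.prod_eq_multiset_prod, Finset.prod_eq_multiset_prod] at hroots
    rw [show (Multiset.map (fun i => X - C (hA.eigenvalues i)) Finset.univ.val)
        = (Multiset.map hA.eigenvalues Finset.univ.val).map (fun a => X - C a) by
      rw [Multiset.map_map]; rfl] at hroots
    rw [show (Multiset.map (fun i => X - C (d i)) Finset.univ.val)
        = (Multiset.map d Finset.univ.val).map (fun a => X - C a) by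
      rw [Multiset.map_map]; rfl] at hroots
    rwa [Polynomial.roots_multiset_prod_X_sub_C, Polynomial.roots_multiset_prod_X_sub_C] at hroots
  show (∑ T ∈ Finset.univ.powersetCard k, ∏ i ∈ T, hA.eigenvalues i)
      = ∑ T ∈ Finset.univ.powersetCard k, ∏ i ∈ T, d i
  rw [← Finset.esymm_map_val, ← Finset.esymm_map_val, hms]

noncomputable def qmap {n : ℕ} (a : Fin n → ℝ) : (Fin n → ℝ) → ℝ :=
  fun x => (1 : ℝ) / 2 * ∑ i, a i * x i ^ 2

noncomputable def Lmap {n : ℕ} (a : Fin n → ℝ) (y : Fin n → ℝ) : (Fin n → ℝ) →L[ℝ] ℝ :=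
  ∑ i, (a i * y i) • ContinuousLinearMap.proj i

lemma Lmap_apply {n : ℕ} (a y : Fin n → ℝ) (j : Fin n) :
    Lmap a y (Pi.single j 1) = a j * y j := by
  rw [Lmap, ContinuousLinearMap.sum_apply]
  rw [Finset.sum_eq_single j]
  · simp
  · intro i _ hij
    have : Pi.single (M := fun _ => ℝ) j 1 i = 0 := Pi.single_eq_of_ne hij 1
    simp [ContinuousLinearMap.proj, this]
  · simp

lemma hasFDerivAt_qmap {n : ℕ} (a : Fin n → ℝ) (y : Fin n → ℝ) :
    HasFDerivAt (qmap a) (Lmap a y) y := by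
  have h1 : ∀ i : Fin n, HasFDerivAt (fun x : Fin n → ℝ => (1:ℝ)/2 * (a i * (x i * x i)))
      ((a i * y i) • ContinuousLinearMap.proj (R := ℝ) (φ := fun _ : Fin n => ℝ) i) y := by
    intro i
    have hyi : HasFDerivAt (fun x : Fin n → ℝ => x i)
        (ContinuousLinearMap.proj (R := ℝ) (φ := fun _ : Fin n => ℝ) i) y :=
      _root_.hasFDerivAt_apply (𝕜 := ℝ) (F' := fun _ : Fin n => ℝ) i y
    have := ((hyi.mul hyi).const_mul (a i)).const_mul ((1:ℝ)/2)
    refine this.congr_fderiv ?_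
    ext v
    simp [ContinuousLinearMap.proj]
    ring
  have hsum := HasFDerivAt.fun_sum (fun i (_ : i ∈ Finset.univ) => h1 i)
  have hq : qmap a = fun x => ∑ i, (1:ℝ)/2 * (a i * (x i * x i)) := by
    funext x
    rw [qmap, Finset.mul_sum]
    congr 1; funext i; ring
  rw [hq, Lmap]
  exact hsum

lemma continuous_qmap {n : ℕ} (a : Fin n → ℝ) : Continuous (qmap a) := by
  unfold qmap; fun_prop

lemma hess_formula {n : ℕ} (a : Fin n → ℝ) (α β : ℝ) (ω : ℝ → ℝ)
    (hω : ContDiffOn ℝ 2 ω (Set.Ioo α β)) (u : (Fin n → ℝ) → ℝ)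
    (hu : ∀ x, u x = ω (qmap a x))
    (x : Fin n → ℝ) (hx : qmap a x ∈ Set.Ioo α β) :
    ∀ i j, hess u x i j
      = deriv ω (qmap a x) * (a j * (Pi.single (M := fun _ => ℝ) i 1 j))
        + (a j * x j) * (deriv (deriv ω) (qmap a x) * (a i * x i)) := by
  intro i j
  set φ := deriv ω with hφ
  set φ2 := deriv (deriv ω) with hφ2
  have hUopen : IsOpen (qmap a ⁻¹' Set.Ioo α β) := isOpen_Ioo.preimage (continuous_qmap a)
  have hωd : ∀ r ∈ Set.Ioo α β, HasDerivAt ω (φ r) r := fun r hr =>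
    ((hω.contDiffAt (isOpen_Ioo.mem_nhds hr)).differentiableAt two_ne_zero).hasDerivAt
  have hφC : ContDiffOn ℝ 1 φ (Set.Ioo α β) := hω.deriv_of_isOpen isOpen_Ioo (by norm_num)
  have hφd : ∀ r ∈ Set.Ioo α β, HasDerivAt φ (φ2 r) r := fun r hr =>
    ((hφC.contDiffAt (isOpen_Ioo.mem_nhds hr)).differentiableAt one_ne_zero).hasDerivAt
  have huq : u = ω ∘ qmap a := funext fun z => hu z
  have hud : ∀ y ∈ qmap a ⁻¹' Set.Ioo α β,
      HasFDerivAt u (φ (qmap a y) • Lmap a y) y := by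
    intro y hy
    rw [huq]
    exact (hωd _ hy).comp_hasFDerivAt y (hasFDerivAt_qmap a y)
  have hfd : ∀ y ∈ qmap a ⁻¹' Set.Ioo α β,
      fderiv ℝ u y (Pi.single j 1) = φ (qmap a y) * (a j * y j) := by
    intro y hy
    rw [(hud y hy).fderiv, ContinuousLinearMap.smul_apply, Lmap_apply]
    rfl
  have hgh : (fun y => fderiv ℝ u y (Pi.single j 1))
      =ᶠ[nhds x] (fun y => φ (qmap a y) * (a j * y j)) :=
    Filter.eventuallyEq_of_mem (hUopen.mem_nhds hx) (fun y hy => hfd y hy)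
  have hcd : HasFDerivAt (fun y => φ (qmap a y)) (φ2 (qmap a x) • Lmap a x) x :=
    (hφd _ hx).comp_hasFDerivAt x (hasFDerivAt_qmap a x)
  have hdd : HasFDerivAt (fun y : Fin n → ℝ => a j * y j)
      (a j • ContinuousLinearMap.proj (R := ℝ) (φ := fun _ : Fin n => ℝ) j) x := by
    have h0 : HasFDerivAt (fun y : Fin n → ℝ => y j)
        (ContinuousLinearMap.proj (R := ℝ) (φ := fun _ : Fin n => ℝ) j) x :=
      _root_.hasFDerivAt_apply (𝕜 := ℝ) (F' := fun _ : Fin n => ℝ) j x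
    exact h0.const_mul (a j)
  have hhd := hcd.fun_mul hdd
  rw [hess, hgh.fderiv_eq, hhd.fderiv]
  simp only [ContinuousLinearMap.add_apply, ContinuousLinearMap.smul_apply, Lmap_apply,
    smul_eq_mul]
  have : (ContinuousLinearMap.proj (R := ℝ) (φ := fun _ : Fin n => ℝ) j) (Pi.single i 1)
      = Pi.single (M := fun _ => ℝ) i 1 j := rfl
  rw [this]

end Aux

/-- If a generalized symmetric function `u(x) = ω(½∑aᵢxᵢ²)` with `ω''` not identically zero
solves `σ_k(λ(D²u)) = 1` on `{α < ½∑aᵢxᵢ² < β}` with `σ_k(a) = 1`, `2 ≤ k ≤ n-1`, then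
`a₁ = ⋯ = aₙ = (n choose k)^{-1/k}`. -/
theorem stmt_17 (n k : ℕ) (hn : 3 ≤ n) (hk : 2 ≤ k) (hkn : k ≤ n - 1)
    (a : Fin n → ℝ) (hpos : ∀ i, 0 < a i) (hsk : esym Finset.univ k a = 1)
    (α β : ℝ) (hα : 0 < α) (hβ : α < β)
    (ω : ℝ → ℝ) (hω : ContDiffOn ℝ 2 ω (Set.Ioo α β))
    (hω'' : ∃ s ∈ Set.Ioo α β, deriv (deriv ω) s ≠ 0)
    (u : (Fin n → ℝ) → ℝ)
    (hu : ∀ x, u x = ω ((1 : ℝ) / 2 * ∑ i, a i * x i ^ 2))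
    (heq : ∀ x : Fin n → ℝ,
      (1 : ℝ) / 2 * ∑ i, a i * x i ^ 2 ∈ Set.Ioo α β →
        ∀ hM : (hess u x).IsHermitian, esym Finset.univ k hM.eigenvalues = 1) :
    ∀ i, a i = ((n.choose k : ℝ)) ^ (-(1 : ℝ) / k) := by

  obtain ⟨p, rfl⟩ : ∃ p, k = p + 2 := ⟨k - 2, by omega⟩
  obtain ⟨s₀, hs₀, hφ2ne⟩ := hω''
  have hu' : ∀ x, u x = ω (qmap a x) := hu
  -- the key identity
  have key : ∀ m : Fin n,
      deriv ω s₀ ^ (p + 2) + (deriv (deriv ω) s₀ * (2 * s₀) * a m) * deriv ω s₀ ^ (p + 1)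
        * esym (Finset.univ.erase m) (p + 1) a = 1 := by
    intro m
    have ham := hpos m
    set t : ℝ := Real.sqrt (2 * s₀ / a m) with ht
    have hs₀pos : 0 < s₀ := lt_trans hα hs₀.1
    have ht2 : t ^ 2 = 2 * s₀ / a m := Real.sq_sqrt (by positivity)
    set x : Fin n → ℝ := Pi.single m t with hx
    have hxm : x m = t := by rw [hx]; exact Pi.single_eq_same (M := fun _ => ℝ) m t
    have hxi : ∀ i, i ≠ m → x i = 0 := by
      intro i hi; rw [hx]; exact Pi.single_eq_of_ne (M := fun _ => ℝ) hi t
    have hqx : qmap a x = s₀ := by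
      rw [qmap]
      rw [Finset.sum_eq_single m]
      · rw [hxm, ht2]
        field_simp
      · intro i _ him
        rw [hxi i him]
        ring
      · intro h; exact absurd (Finset.mem_univ m) h
    have hmem : (1 : ℝ) / 2 * ∑ i, a i * x i ^ 2 ∈ Set.Ioo α β := by
      have : (1 : ℝ) / 2 * ∑ i, a i * x i ^ 2 = qmap a x := rfl
      rw [this, hqx]; exact hs₀
    set d : Fin n → ℝ := fun j =>
      deriv ω s₀ * a j + (if j = m then deriv (deriv ω) s₀ * (2 * s₀) * a m else 0) with hd
    have hdiag : hess u x = Matrix.diagonal d := by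
      ext i j
      rw [hess_formula a α β ω hω u hu' x (by rw [hqx]; exact hs₀) i j, hqx]
      by_cases hij : i = j
      · subst hij
        rw [Matrix.diagonal_apply_eq]
        by_cases him : i = m
        · subst him
          have h1 : Pi.single (M := fun _ => ℝ) i 1 i = 1 := Pi.single_eq_same i 1
          have h2s : a i * t ^ 2 = 2 * s₀ := by rw [ht2]; field_simp
          have hdi : d i = deriv ω s₀ * a i + deriv (deriv ω) s₀ * (2 * s₀) * a i := by
            rw [hd]; simp
          rw [h1, hdi, hxm]
          linear_combination (deriv (deriv ω) s₀ * a i) * h2s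
        · have h1 : Pi.single (M := fun _ => ℝ) i 1 i = 1 := Pi.single_eq_same i 1
          have hdi : d i = deriv ω s₀ * a i := by
            rw [hd]; simp [if_neg him]
          rw [h1, hxi i him, hdi]
          ring
      · rw [Matrix.diagonal_apply_ne _ hij]
        have h1 : Pi.single (M := fun _ => ℝ) i 1 j = 0 := Pi.single_eq_of_ne (Ne.symm hij) 1
        rw [h1]
        by_cases him : i = m
        · have hjm : j ≠ m := fun h => hij (h ▸ him)
          rw [hxi j hjm]; ring
        · rw [hxi i him]; ring
    have hherm : (hess u x).IsHermitian := by
      rw [hdiag]; exact Matrix.isHermitian_diagonal d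
    have h1 : esym Finset.univ (p + 2) d = 1 := by
      rw [← esym_eigenvalues_diagonal' d (hess u x) hherm hdiag]
      exact heq x hmem hherm
    -- expand esym of d
    have hcongr1 : esym (Finset.univ.erase m) (p + 2) d
        = deriv ω s₀ ^ (p + 2) * esym (Finset.univ.erase m) (p + 2) a := by
      rw [esym_congr' _ _ (fun i hi => show d i = deriv ω s₀ * a i by
        rw [hd]; simp [if_neg (Finset.mem_erase.mp hi).1]), esym_smul']
    have hcongr2 : esym (Finset.univ.erase m) (p + 1) d
        = deriv ω s₀ ^ (p + 1) * esym (Finset.univ.erase m) (p + 1) a := by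
      rw [esym_congr' _ _ (fun i hi => show d i = deriv ω s₀ * a i by
        rw [hd]; simp [if_neg (Finset.mem_erase.mp hi).1]), esym_smul']
    have hdm : d m = deriv ω s₀ * a m + deriv (deriv ω) s₀ * (2 * s₀) * a m := by
      rw [hd]; simp
    have hladd : esym Finset.univ (p + 2) d
        = esym (Finset.univ.erase m) (p + 2) d + d m * esym (Finset.univ.erase m) (p + 1) d :=
      esym_ladder' m (p + 1) d
    have hladda : esym Finset.univ (p + 2) a
        = esym (Finset.univ.erase m) (p + 2) a + a m * esym (Finset.univ.erase m) (p + 1) a :=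
      esym_ladder' m (p + 1) a
    have hska : esym Finset.univ (p + 2) a = 1 := hsk
    rw [hladd, hcongr1, hcongr2, hdm] at h1
    rw [hladda] at hska
    linear_combination h1 - (deriv ω s₀) ^ (p + 2) * hska
  -- φ s₀ ≠ 0
  have m0 : Fin n := ⟨0, by omega⟩
  have hφne : deriv ω s₀ ≠ 0 := by
    intro h
    have := key m0
    rw [h] at this
    simp [pow_succ] at this
  have hs₀pos : 0 < s₀ := lt_trans hα hs₀.1
  -- equal products
  have hprod : ∀ i j : Fin n,
      a i * esym (Finset.univ.erase i) (p + 1) a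
        = a j * esym (Finset.univ.erase j) (p + 1) a := by
    intro i j
    have hi := key i
    have hj := key j
    have hc : deriv (deriv ω) s₀ * (2 * s₀) * deriv ω s₀ ^ (p + 1) ≠ 0 := by
      apply mul_ne_zero
      · apply mul_ne_zero hφ2ne
        positivity
      · exact pow_ne_zero _ hφne
    apply mul_left_cancel₀ hc
    linear_combination hi - hj
  -- all a i equal
  have haij : ∀ i j : Fin n, a i = a j := by
    intro i j
    by_cases hij : i = j
    · rw [hij]
    · set s₂ : Finset (Fin n) := (Finset.univ.erase i).erase j with hs₂
      have hjmem : j ∈ Finset.univ.erase i := Finset.mem_erase.mpr ⟨fun h => hij h.symm, Finset.mem_univ j⟩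
      have himem : i ∈ Finset.univ.erase j := Finset.mem_erase.mpr ⟨hij, Finset.mem_univ i⟩
      have hBi : esym (Finset.univ.erase i) (p + 1) a
          = esym s₂ (p + 1) a + a j * esym s₂ p a := by
        conv_lhs => rw [← Finset.insert_erase hjmem]
        exact esym_insert' j s₂ (Finset.notMem_erase j _) p a
      have hs₂' : (Finset.univ.erase j).erase i = s₂ := Finset.erase_right_comm
      have hBj : esym (Finset.univ.erase j) (p + 1) a
          = esym s₂ (p + 1) a + a i * esym s₂ p a := by
        rw [← Finset.insert_erase himem, hs₂']
        exact esym_insert' i s₂ (by rw [← hs₂']; exact Finset.notMem_erase i _) p a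
      have hXpos : 0 < esym s₂ (p + 1) a := by
        apply esym_pos' _ _ _ hpos
        have hcard : s₂.card = n - 2 := by
          rw [hs₂, Finset.card_erase_of_mem hjmem, Finset.card_erase_of_mem (Finset.mem_univ i)]
          simp only [Finset.card_univ, Fintype.card_fin]
          omega
        rw [hcard]
        omega
      have heqq := hprod i j
      rw [hBi, hBj] at heqq
      have hz : (a i - a j) * esym s₂ (p + 1) a = 0 := by linear_combination heqq
      rcases mul_eq_zero.mp hz with h | h
      · linarith [sub_eq_zero.mp h]
      · exact absurd h hXpos.ne'
  -- conclude
  intro i0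
  set c : ℝ := a i0 with hc
  have hcall : ∀ j, a j = c := fun j => haij j i0
  have hcpos : 0 < c := hpos i0
  have hesymc : esym Finset.univ (p + 2) a = (n.choose (p + 2) : ℝ) * c ^ (p + 2) := by
    rw [esym]
    have : ∀ T ∈ Finset.univ.powersetCard (p + 2), (∏ i ∈ T, a i) = c ^ (p + 2) := by
      intro T hT
      rw [Finset.prod_congr rfl (fun i _ => hcall i), Finset.prod_const,
        (Finset.mem_powersetCard.mp hT).2]
    rw [Finset.sum_congr rfl this, Finset.sum_const, nsmul_eq_mul,
      Finset.card_powersetCard, Finset.card_univ, Fintype.card_fin]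
  have hCpos : (0 : ℝ) < (n.choose (p + 2) : ℝ) :=
    Nat.cast_pos.mpr (Nat.choose_pos (by omega))
  have hck : c ^ (p + 2) = ((n.choose (p + 2) : ℝ))⁻¹ := by
    have := hsk
    rw [hesymc] at this
    field_simp at this ⊢
    linarith
  have hk2 : ((p : ℝ) + 2) ≠ 0 := by positivity
  have hrpow : (((n.choose (p + 2) : ℝ)) ^ (-(1 : ℝ) / ((p : ℕ) + 2 : ℕ))) ^ (p + 2)
      = ((n.choose (p + 2) : ℝ))⁻¹ := by
    rw [← Real.rpow_natCast (((n.choose (p + 2) : ℝ)) ^ (-(1 : ℝ) / ((p : ℕ) + 2 : ℕ))) (p + 2),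
      ← Real.rpow_mul hCpos.le]
    have : (-(1 : ℝ) / ((p : ℕ) + 2 : ℕ)) * ((p + 2 : ℕ) : ℝ) = -1 := by
      push_cast
      field_simp
    rw [this, Real.rpow_neg_one]
  have hinj := (pow_left_strictMonoOn₀ (M₀ := ℝ) (n := p + 2) (by omega)).injOn
  have : c = ((n.choose (p + 2) : ℝ)) ^ (-(1 : ℝ) / ((p : ℕ) + 2 : ℕ)) := by
    apply hinj (Set.mem_setOf.mpr hcpos.le)
      (Set.mem_setOf.mpr (Real.rpow_nonneg hCpos.le _))
    show c ^ (p + 2) = (((n.choose (p + 2) : ℝ)) ^ (-(1 : ℝ) / ((p : ℕ) + 2 : ℕ))) ^ (p + 2)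
    rw [hck, hrpow]
  exact_mod_cast this
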